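/- Let A ∈ ℝ^{m×n} and Q ∈ ℝ^{m×s} have orthonormal columns, and set E = A − QQᵀA. Let γ̃ᵢ, β̃ᵢ and γᵢ, βᵢ be the generalized singular value pairs of (QQᵀA, B) and (A, B) respectively, with γᵢ² + βᵢ² = 1 = γ̃ᵢ² + β̃ᵢ². Then for each i, |γ̃ᵢ βᵢ − β̃ᵢ γᵢ| ≤ ‖E‖₂ · ‖[A; B]†‖₂, and in particular if β_{k+1} > 0, γ̃_{k+1} ≤ (γ_{k+1} + ‖E‖₂ · ‖[A; B]†‖₂) / β_{k+1}. -/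

import Mathlib

open Matrix

/-- Spectral norm (operator 2-norm) of a real matrix. -/
noncomputable def spec {m n : Type*} [Fintype m] [Fintype n] [DecidableEq m] [DecidableEq n]
    (A : Matrix m n ℝ) : ℝ :=
  ‖LinearMap.toContinuousLinearMap (Matrix.toEuclideanLin A)‖

/-- Moore–Penrose pseudoinverse, characterized by the four Penrose conditions. -/
def IsMoorePenrose {m n : Type*} [Fintype m] [Fintype n]
    (A : Matrix m n ℝ) (Ap : Matrix n m ℝ) : Prop :=
  A * Ap * A = A ∧ Ap * A * Ap = Ap ∧ (A * Ap)ᵀ = A * Ap ∧ (Ap * A)ᵀ = Ap * A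

set_option maxHeartbeats 1000000

namespace GsvdAux

noncomputable def eN {k : Type*} [Fintype k] (v : k → ℝ) : ℝ := Real.sqrt (∑ i, v i ^ 2)

lemma eN_eq_norm {k : Type*} [Fintype k] (v : k → ℝ) :
    eN v = ‖(WithLp.equiv 2 (k → ℝ)).symm v‖ := by
  rw [EuclideanSpace.norm_eq]
  simp only [Real.norm_eq_abs, sq_abs]
  rfl

lemma eN_nonneg {k : Type*} [Fintype k] (v : k → ℝ) : 0 ≤ eN v := Real.sqrt_nonneg _

lemma eN_sq {k : Type*} [Fintype k] (v : k → ℝ) : eN v ^ 2 = ∑ i, v i ^ 2 :=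
  Real.sq_sqrt (by positivity)

lemma eN_sub_le {k : Type*} [Fintype k] (v w : k → ℝ) : eN v - eN w ≤ eN (v - w) := by
  simp only [eN_eq_norm]
  have h : (WithLp.equiv 2 (k → ℝ)).symm (v - w) =
      (WithLp.equiv 2 (k → ℝ)).symm v - (WithLp.equiv 2 (k → ℝ)).symm w := by simp
  rw [h]
  exact norm_sub_norm_le _ _

lemma spec_mulVec_le {m n : Type*} [Fintype m] [Fintype n] [DecidableEq m] [DecidableEq n]
    (M : Matrix m n ℝ) (x : n → ℝ) : eN (M *ᵥ x) ≤ spec M * eN x := by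
  have h := (LinearMap.toContinuousLinearMap (Matrix.toEuclideanLin M)).le_opNorm
      ((WithLp.equiv 2 (n → ℝ)).symm x)
  simpa [eN_eq_norm, Matrix.toEuclideanLin_apply, spec] using h

lemma spec_nonneg {m n : Type*} [Fintype m] [Fintype n] [DecidableEq m] [DecidableEq n]
    (M : Matrix m n ℝ) : 0 ≤ spec M := norm_nonneg _

lemma sumsq_mulVec_orth {m n : Type*} [Fintype m] [Fintype n] [DecidableEq n]
    (U : Matrix m n ℝ) (hU : Uᵀ * U = 1) (v : n → ℝ) :
    ∑ i, (U *ᵥ v) i ^ 2 = ∑ j, v j ^ 2 := by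
  have h1 : ∑ i, (U *ᵥ v) i ^ 2 = (U *ᵥ v) ⬝ᵥ (U *ᵥ v) := by
    simp [dotProduct, sq]
  have h2 : (U *ᵥ v) ⬝ᵥ (U *ᵥ v) = (Uᵀ *ᵥ (U *ᵥ v)) ⬝ᵥ v := by
    rw [Matrix.dotProduct_mulVec, Matrix.mulVec_transpose]
  rw [h1, h2, Matrix.mulVec_mulVec, hU, Matrix.one_mulVec]
  simp [dotProduct, sq]

lemma eN_gsvd {m n : Type*} [Fintype m] [Fintype n] [DecidableEq n]
    (U : Matrix m n ℝ) (hU : Uᵀ * U = 1) (g : n → ℝ) (Y : Matrix n n ℝ) (x : n → ℝ) :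
    eN ((U * Matrix.diagonal g * Yᵀ) *ᵥ x) ^ 2 = ∑ j, g j ^ 2 * (Yᵀ *ᵥ x) j ^ 2 := by
  rw [eN_sq]
  have h : (U * Matrix.diagonal g * Yᵀ) *ᵥ x = U *ᵥ (Matrix.diagonal g *ᵥ (Yᵀ *ᵥ x)) := by
    rw [Matrix.mulVec_mulVec, Matrix.mulVec_mulVec]
  rw [h, sumsq_mulVec_orth U hU]
  apply Finset.sum_congr rfl
  intro j _
  rw [Matrix.mulVec_diagonal]
  ring

lemma eN_fromRows_sq {m d n : Type*} [Fintype m] [Fintype d] [Fintype n]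
    (A : Matrix m n ℝ) (B : Matrix d n ℝ) (x : n → ℝ) :
    eN ((Matrix.fromRows A B) *ᵥ x) ^ 2 = eN (A *ᵥ x) ^ 2 + eN (B *ᵥ x) ^ 2 := by
  simp only [eN_sq, Matrix.fromRows_mulVec]
  rw [Fintype.sum_sum_type]
  simp

lemma left_inv_of_pinv {m n : Type*} [Fintype m] [Fintype n] [DecidableEq n]
    (S : Matrix m n ℝ) (Sp : Matrix n m ℝ)
    (h1 : S * Sp * S = S) (hinj : ∀ x : n → ℝ, S *ᵥ x = 0 → x = 0) :
    Sp * S = 1 := by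
  have key : ∀ x : n → ℝ, (Sp * S) *ᵥ x = x := by
    intro x
    apply sub_eq_zero.mp
    apply hinj
    have h : S *ᵥ ((Sp * S) *ᵥ x - x) = (S * Sp * S) *ᵥ x - S *ᵥ x := by
      rw [Matrix.mulVec_sub, Matrix.mulVec_mulVec, ← Matrix.mul_assoc]
    rw [h, h1, sub_self]
  ext i j
  have h := congrFun (key (Pi.single j 1)) i
  rw [Matrix.mulVec_single_one] at h
  simp only [Matrix.col_apply] at h
  rw [h]
  simp [Matrix.one_apply, Pi.single_apply, eq_comm]

lemma sumsq_pos {k : Type*} [Fintype k] {v : k → ℝ} (hv : v ≠ 0) : 0 < ∑ i, v i ^ 2 := by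
  rcases Function.ne_iff.mp hv with ⟨i, hi⟩
  have hpos : (0:ℝ) < v i ^ 2 := by
    have := sq_abs (v i)
    nlinarith [abs_pos.mpr hi]
  calc (0:ℝ) < v i ^ 2 := hpos
    _ ≤ ∑ j, v j ^ 2 := Finset.single_le_sum (fun j _ => sq_nonneg (v j)) (Finset.mem_univ i)

lemma mulVec_inj_of_isUnit {n : Type*} [Fintype n] [DecidableEq n]
    {Y : Matrix n n ℝ} (hY : IsUnit Y) {x : n → ℝ} (h : Yᵀ *ᵥ x = 0) : x = 0 := by
  have hYt : IsUnit Yᵀ := (Matrix.isUnit_transpose _).mpr hY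
  have hin := Matrix.mulVec_injective_iff_isUnit.mpr hYt
  have h0 : Yᵀ *ᵥ x = Yᵀ *ᵥ 0 := by rw [h, Matrix.mulVec_zero]
  exact hin h0

lemma exists_intersection {n : ℕ} (Y Yt : Matrix (Fin n) (Fin n) ℝ) (i : Fin n) :
    ∃ x : Fin n → ℝ, x ≠ 0 ∧ (∀ j, i < j → (Yᵀ *ᵥ x) j = 0) ∧
      (∀ j, j < i → (Ytᵀ *ᵥ x) j = 0) := by
  classical
  set F : (Fin n → ℝ) →ₗ[ℝ] ({j : Fin n // j ≠ i} → ℝ) :=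
    LinearMap.pi (fun j => (LinearMap.proj (j : Fin n)).comp
      (Matrix.mulVecLin (if i < (j : Fin n) then Yᵀ else Ytᵀ))) with hF
  have hcard : Fintype.card {j : Fin n // j ≠ i} = n - 1 := by
    have := Fintype.card_subtype_compl (fun j : Fin n => j = i)
    simpa using this
  by_contra hcon
  push_neg at hcon
  have hinj : Function.Injective F := by
    rw [← LinearMap.ker_eq_bot, LinearMap.ker_eq_bot']
    intro x hx
    by_contra hx0
    obtain h := hcon x hx0
    have hcoord : ∀ (j : Fin n) (hj : j ≠ i),
        ((if i < j then Yᵀ else Ytᵀ) *ᵥ x) j = 0 := by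
      intro j hj
      have := congrFun hx ⟨j, hj⟩
      simpa [hF, LinearMap.pi_apply] using this
    have h1 : ∀ j : Fin n, i < j → (Yᵀ *ᵥ x) j = 0 := by
      intro j hij
      have := hcoord j (ne_of_gt hij)
      rwa [if_pos hij] at this
    obtain ⟨j, hji, hne⟩ := h h1
    exact hne (by
      have := hcoord j (ne_of_lt hji)
      rwa [if_neg (by omega : ¬ i < j)] at this)
  have hle := LinearMap.finrank_le_finrank_of_injective hinj
  rw [Module.finrank_fintype_fun_eq_card, Module.finrank_fintype_fun_eq_card,
    Fintype.card_fin, hcard] at hle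
  have hn : 0 < n := i.pos
  omega

lemma scalar_angle {φ ψ φt ψt ε : ℝ} (hφ : 0 ≤ φ) (hψ : 0 ≤ ψ) (hφt : 0 ≤ φt)
    (hψt : 0 ≤ ψt) (h1 : φ ^ 2 + ψ ^ 2 = 1) (h2 : φt ^ 2 + ψt ^ 2 = 1)
    (hch : |φt * ψ - ψt * φ| ≤ ε) :
    Real.arcsin ψt ≤ Real.arcsin ψ + Real.arcsin ε := by
  have hψ1 : ψ ≤ 1 := by nlinarith
  have hψt1 : ψt ≤ 1 := by nlinarith
  have hε0 : 0 ≤ ε := le_trans (abs_nonneg _) hch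
  by_contra hcon
  push_neg at hcon
  have ha0 : 0 ≤ Real.arcsin ψ := Real.arcsin_nonneg.mpr hψ
  have hat2 : Real.arcsin ψt ≤ Real.pi / 2 := Real.arcsin_le_pi_div_two _
  have hδ0 : 0 ≤ Real.arcsin ε := Real.arcsin_nonneg.mpr hε0
  have hε1 : ε < 1 := by
    by_contra hge
    push_neg at hge
    rw [Real.arcsin_of_one_le hge] at hcon
    have : Real.arcsin ψt ≤ Real.arcsin ψ + Real.pi / 2 := by linarith
    exact absurd hcon (not_lt.mpr this)
  have hsinδ : Real.sin (Real.arcsin ε) = ε := Real.sin_arcsin (by linarith) (le_of_lt hε1)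
  have hsub : Real.sin (Real.arcsin ψt - Real.arcsin ψ) = ψt * φ - φt * ψ := by
    rw [Real.sin_sub, Real.sin_arcsin (by linarith) hψt1, Real.sin_arcsin (by linarith) hψ1,
      Real.cos_arcsin, Real.cos_arcsin]
    have e1 : 1 - ψ ^ 2 = φ ^ 2 := by linarith
    have e2 : 1 - ψt ^ 2 = φt ^ 2 := by linarith
    rw [e1, e2, Real.sqrt_sq hφ, Real.sqrt_sq hφt]
  have hb : ψt * φ - φt * ψ ≤ ε := by
    have h3 : ψt * φ - φt * ψ ≤ |φt * ψ - ψt * φ| := by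
      rw [abs_sub_comm]
      exact le_abs_self _
    linarith
  have hmono := Real.strictMonoOn_sin (a := Real.arcsin ε)
    (b := Real.arcsin ψt - Real.arcsin ψ)
    ⟨by linarith [Real.pi_pos], Real.arcsin_le_pi_div_two _⟩
    ⟨by linarith [Real.arcsin_le_pi_div_two ψ, Real.arcsin_nonneg.mpr hψt], by linarith⟩
    (by linarith)
  rw [hsinδ, hsub] at hmono
  linarith

lemma core_bound {n : ℕ} (Y Yt : Matrix (Fin n) (Fin n) ℝ) (hY : IsUnit Y) (hYt : IsUnit Yt)
    (g b gt bt : Fin n → ℝ)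
    (hb0 : ∀ i, 0 ≤ b i) (hbt0 : ∀ i, 0 ≤ bt i)
    (hnorm : ∀ i, g i ^ 2 + b i ^ 2 = 1) (hnormt : ∀ i, gt i ^ 2 + bt i ^ 2 = 1)
    (hbinc : ∀ j k : Fin n, j ≤ k → b j ≤ b k)
    (hbtinc : ∀ j k : Fin n, j ≤ k → bt j ≤ bt k)
    (ε : ℝ)
    (H : ∀ x : Fin n → ℝ, x ≠ 0 →
      |Real.sqrt (∑ j, gt j ^ 2 * (Ytᵀ *ᵥ x) j ^ 2) * Real.sqrt (∑ j, b j ^ 2 * (Yᵀ *ᵥ x) j ^ 2) -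
        Real.sqrt (∑ j, bt j ^ 2 * (Ytᵀ *ᵥ x) j ^ 2) * Real.sqrt (∑ j, g j ^ 2 * (Yᵀ *ᵥ x) j ^ 2)|
        ≤ ε * (Real.sqrt (∑ j, (Yᵀ *ᵥ x) j ^ 2) * Real.sqrt (∑ j, (Ytᵀ *ᵥ x) j ^ 2))) :
    ∀ i : Fin n, Real.arcsin (bt i) ≤ Real.arcsin (b i) + Real.arcsin ε := by
  intro i
  obtain ⟨x, hx0, hyzero, hytzero⟩ := exists_intersection Y Yt i
  set y : Fin n → ℝ := Yᵀ *ᵥ x with hy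
  set yt : Fin n → ℝ := Ytᵀ *ᵥ x with hyt
  have hyne : y ≠ 0 := fun h => hx0 (mulVec_inj_of_isUnit hY h)
  have hytne : yt ≠ 0 := fun h => hx0 (mulVec_inj_of_isUnit hYt h)
  have hSy : 0 < ∑ j, y j ^ 2 := sumsq_pos hyne
  have hSyt : 0 < ∑ j, yt j ^ 2 := sumsq_pos hytne
  set sy := Real.sqrt (∑ j, y j ^ 2) with hsy
  set syt := Real.sqrt (∑ j, yt j ^ 2) with hsyt
  have hsy0 : 0 < sy := Real.sqrt_pos.mpr hSy
  have hsyt0 : 0 < syt := Real.sqrt_pos.mpr hSyt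
  have hsysq : sy ^ 2 = ∑ j, y j ^ 2 := Real.sq_sqrt hSy.le
  have hsytsq : syt ^ 2 = ∑ j, yt j ^ 2 := Real.sq_sqrt hSyt.le
  set P := Real.sqrt (∑ j, g j ^ 2 * y j ^ 2) with hP
  set Q := Real.sqrt (∑ j, b j ^ 2 * y j ^ 2) with hQ
  set Pt := Real.sqrt (∑ j, gt j ^ 2 * yt j ^ 2) with hPt
  set Qt := Real.sqrt (∑ j, bt j ^ 2 * yt j ^ 2) with hQt
  have hP0 : 0 ≤ P := Real.sqrt_nonneg _
  have hQ0 : 0 ≤ Q := Real.sqrt_nonneg _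
  have hPt0 : 0 ≤ Pt := Real.sqrt_nonneg _
  have hQt0 : 0 ≤ Qt := Real.sqrt_nonneg _
  have hPsq : P ^ 2 = ∑ j, g j ^ 2 * y j ^ 2 := Real.sq_sqrt (by positivity)
  have hQsq : Q ^ 2 = ∑ j, b j ^ 2 * y j ^ 2 := Real.sq_sqrt (by positivity)
  have hPtsq : Pt ^ 2 = ∑ j, gt j ^ 2 * yt j ^ 2 := Real.sq_sqrt (by positivity)
  have hQtsq : Qt ^ 2 = ∑ j, bt j ^ 2 * yt j ^ 2 := Real.sq_sqrt (by positivity)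
  have hPQ : P ^ 2 + Q ^ 2 = sy ^ 2 := by
    rw [hPsq, hQsq, hsysq, ← Finset.sum_add_distrib]
    apply Finset.sum_congr rfl
    intro j _
    nlinarith [hnorm j]
  have hPtQt : Pt ^ 2 + Qt ^ 2 = syt ^ 2 := by
    rw [hPtsq, hQtsq, hsytsq, ← Finset.sum_add_distrib]
    apply Finset.sum_congr rfl
    intro j _
    nlinarith [hnormt j]
  have hQle : Q ≤ b i * sy := by
    have hsq : Q ^ 2 ≤ (b i * sy) ^ 2 := by
      rw [hQsq, mul_pow, hsysq, Finset.mul_sum]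
      apply Finset.sum_le_sum
      intro j _
      rcases le_or_gt j i with hji | hij
      · have h1 : b j ≤ b i := hbinc j i hji
        have h2 : b j ^ 2 ≤ b i ^ 2 := by nlinarith [hb0 j]
        nlinarith [sq_nonneg (y j)]
      · rw [hyzero j hij]
        simp
    have hbs : 0 ≤ b i * sy := mul_nonneg (hb0 i) hsy0.le
    exact (pow_le_pow_iff_left₀ hQ0 hbs two_ne_zero).mp hsq
  have hQtge : bt i * syt ≤ Qt := by
    have hsq : (bt i * syt) ^ 2 ≤ Qt ^ 2 := by
      rw [hQtsq, mul_pow, hsytsq, Finset.mul_sum]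
      apply Finset.sum_le_sum
      intro j _
      rcases lt_or_ge j i with hji | hij
      · rw [hytzero j hji]
        simp
      · have h1 : bt i ≤ bt j := hbtinc i j hij
        have h2 : bt i ^ 2 ≤ bt j ^ 2 := by nlinarith [hbt0 i]
        nlinarith [sq_nonneg (yt j)]
    have hbs : 0 ≤ bt i * syt := mul_nonneg (hbt0 i) hsyt0.le
    exact (pow_le_pow_iff_left₀ hbs hQt0 two_ne_zero).mp hsq
  have hH := H x hx0
  rw [← hy, ← hyt, ← hP, ← hQ, ← hPt, ← hQt, ← hsy, ← hsyt] at hH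
  have hnrm1 : (P / sy) ^ 2 + (Q / sy) ^ 2 = 1 := by
    rw [div_pow, div_pow, ← add_div, hPQ, div_self (pow_ne_zero 2 hsy0.ne')]
  have hnrm2 : (Pt / syt) ^ 2 + (Qt / syt) ^ 2 = 1 := by
    rw [div_pow, div_pow, ← add_div, hPtQt, div_self (pow_ne_zero 2 hsyt0.ne')]
  have hch : |Pt / syt * (Q / sy) - Qt / syt * (P / sy)| ≤ ε := by
    rw [div_mul_div_comm, div_mul_div_comm, div_sub_div_same, abs_div,
      abs_of_pos (mul_pos hsyt0 hsy0)]
    rw [div_le_iff₀ (mul_pos hsyt0 hsy0)]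
    calc |Pt * Q - Qt * P| ≤ ε * (sy * syt) := hH
      _ = ε * (syt * sy) := by ring
  have key := scalar_angle (φ := P / sy) (ψ := Q / sy) (φt := Pt / syt) (ψt := Qt / syt)
    (div_nonneg hP0 hsy0.le) (div_nonneg hQ0 hsy0.le) (div_nonneg hPt0 hsyt0.le)
    (div_nonneg hQt0 hsyt0.le) hnrm1 hnrm2 hch
  have h1 : Real.arcsin (bt i) ≤ Real.arcsin (Qt / syt) := by
    apply Real.monotone_arcsin
    rw [le_div_iff₀ hsyt0]
    exact hQtge
  have h2 : Real.arcsin (Q / sy) ≤ Real.arcsin (b i) := by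
    apply Real.monotone_arcsin
    rw [div_le_iff₀ hsy0]
    exact hQle
  linarith

lemma b_mono {n : ℕ} (g b : Fin n → ℝ)
    (hg0 : ∀ i, 0 ≤ g i) (hb0 : ∀ i, 0 ≤ b i)
    (hnorm : ∀ i, g i ^ 2 + b i ^ 2 = 1)
    (hord : ∀ i j : Fin n, i ≤ j → g j * b i ≤ g i * b j) :
    ∀ i j : Fin n, i ≤ j → b i ≤ b j := by
  have hgdec : ∀ i j : Fin n, i ≤ j → g j ≤ g i := by
    intro i j hij
    by_contra hlt
    push_neg at hlt
    have hbj : b j < b i := by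
      nlinarith [hnorm i, hnorm j, hg0 i, hg0 j, hb0 i, hb0 j]
    have hbipos : 0 < b i := lt_of_le_of_lt (hb0 j) hbj
    have hordij := hord i j hij
    nlinarith [mul_pos (sub_pos.mpr hlt) hbipos,
      mul_nonneg (hg0 i) (sub_nonneg.mpr hbj.le)]
  intro i j hij
  have hgd := hgdec i j hij
  have hsq : b i ^ 2 ≤ b j ^ 2 := by nlinarith [hnorm i, hnorm j, hg0 j]
  exact (pow_le_pow_iff_left₀ (hb0 i) (hb0 j) two_ne_zero).mp hsq

lemma abs_sin_le {z δ : ℝ} (hz : |z| ≤ δ) (hδ : δ ≤ Real.pi / 2) :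
    |Real.sin z| ≤ Real.sin δ := by
  have hmain : ∀ w : ℝ, 0 ≤ w → w ≤ δ → Real.sin w ≤ Real.sin δ := by
    intro w hw0 hwδ
    have hδ0 : 0 ≤ δ := le_trans hw0 hwδ
    exact Real.strictMonoOn_sin.monotoneOn
      ⟨by linarith [Real.pi_pos], by linarith⟩ ⟨by linarith [Real.pi_pos], hδ⟩ hwδ
  rcases le_or_gt 0 z with hz0 | hz0
  · have h1 : |z| = z := abs_of_nonneg hz0
    have h2 : Real.sin z ≥ 0 := Real.sin_nonneg_of_nonneg_of_le_pi hz0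
      (by rw [h1] at hz; linarith [Real.pi_pos])
    rw [abs_of_nonneg h2]
    exact hmain z hz0 (by rwa [h1] at hz)
  · have h1 : |z| = -z := abs_of_neg hz0
    have h2 : Real.sin z ≤ 0 := by
      have := Real.sin_nonneg_of_nonneg_of_le_pi (by linarith : (0:ℝ) ≤ -z)
        (by rw [h1] at hz; linarith [Real.pi_pos])
      rw [Real.sin_neg] at this
      linarith
    rw [abs_of_nonpos h2, ← Real.sin_neg]
    exact hmain (-z) (by linarith) (by rwa [h1] at hz)

end GsvdAux

open GsvdAux

/-- Sun's perturbation theorem specialized to F = 0: with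
E = A − QQᵀA and generalized singular value pairs (γᵢ, βᵢ) of (A, B) and
(γ̃ᵢ, β̃ᵢ) of (QQᵀA, B), one has |γ̃ᵢ βᵢ − β̃ᵢ γᵢ| ≤ ‖E‖₂ ‖[A; B]†‖₂ for all i,
and γ̃ᵢ ≤ (γᵢ + ‖E‖₂ ‖[A; B]†‖₂)/βᵢ whenever βᵢ > 0. -/
theorem gsvd_perturbation {m d n s : ℕ}
    (A : Matrix (Fin m) (Fin n) ℝ) (B : Matrix (Fin d) (Fin n) ℝ)
    (hArank : A.rank = n) (hBrank : B.rank = n)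
    (Q : Matrix (Fin m) (Fin s) ℝ) (hQ : Qᵀ * Q = 1)
    (E : Matrix (Fin m) (Fin n) ℝ) (hE : E = A - Q * Qᵀ * A)
    -- GSVD of (A, B)
    (U : Matrix (Fin m) (Fin n) ℝ) (V : Matrix (Fin d) (Fin n) ℝ)
    (Y : Matrix (Fin n) (Fin n) ℝ) (hYunit : IsUnit Y)
    (hU : Uᵀ * U = 1) (hV : Vᵀ * V = 1)
    (g b : Fin n → ℝ)
    (hg0 : ∀ i, 0 ≤ g i) (hb0 : ∀ i, 0 ≤ b i)
    (hnorm : ∀ i, g i ^ 2 + b i ^ 2 = 1)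
    (hord : ∀ i j : Fin n, i ≤ j → g j * b i ≤ g i * b j)
    (hA : A = U * Matrix.diagonal g * Yᵀ)
    (hB : B = V * Matrix.diagonal b * Yᵀ)
    -- GSVD of (QQᵀA, B)
    (Ut : Matrix (Fin m) (Fin n) ℝ) (Vt : Matrix (Fin d) (Fin n) ℝ)
    (Yt : Matrix (Fin n) (Fin n) ℝ) (hYtunit : IsUnit Yt)
    (hUt : Utᵀ * Ut = 1) (hVt : Vtᵀ * Vt = 1)
    (gt bt : Fin n → ℝ)
    (hgt0 : ∀ i, 0 ≤ gt i) (hbt0 : ∀ i, 0 ≤ bt i)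
    (hnormt : ∀ i, gt i ^ 2 + bt i ^ 2 = 1)
    (hordt : ∀ i j : Fin n, i ≤ j → gt j * bt i ≤ gt i * bt j)
    (hAt : Q * Qᵀ * A = Ut * Matrix.diagonal gt * Ytᵀ)
    (hBt : B = Vt * Matrix.diagonal bt * Ytᵀ)
    -- pseudoinverse of the stacked matrix [A; B]
    (Sp : Matrix (Fin n) (Fin m ⊕ Fin d) ℝ)
    (hSp : IsMoorePenrose (fromRows A B) Sp) :
    (∀ i : Fin n, |gt i * b i - bt i * g i| ≤ spec E * spec Sp) ∧
    (∀ i : Fin n, 0 < b i → gt i ≤ (g i + spec E * spec Sp) / b i) := by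
  set ε := spec E * spec Sp with hεdef
  have hε0 : 0 ≤ ε := mul_nonneg (spec_nonneg E) (spec_nonneg Sp)
  -- basic norm identities
  have hAx : ∀ x : Fin n → ℝ, eN (A *ᵥ x) ^ 2 = ∑ j, g j ^ 2 * (Yᵀ *ᵥ x) j ^ 2 := by
    intro x; rw [hA]; exact eN_gsvd U hU g Y x
  have hBx : ∀ x : Fin n → ℝ, eN (B *ᵥ x) ^ 2 = ∑ j, b j ^ 2 * (Yᵀ *ᵥ x) j ^ 2 := by
    intro x; rw [hB]; exact eN_gsvd V hV b Y x
  have hAtx : ∀ x : Fin n → ℝ,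
      eN ((Q * Qᵀ * A) *ᵥ x) ^ 2 = ∑ j, gt j ^ 2 * (Ytᵀ *ᵥ x) j ^ 2 := by
    intro x; rw [hAt]; exact eN_gsvd Ut hUt gt Yt x
  have hBtx : ∀ x : Fin n → ℝ, eN (B *ᵥ x) ^ 2 = ∑ j, bt j ^ 2 * (Ytᵀ *ᵥ x) j ^ 2 := by
    intro x; rw [hBt]; exact eN_gsvd Vt hVt bt Yt x
  set S := Matrix.fromRows A B with hSdef
  have hSx : ∀ x : Fin n → ℝ, eN (S *ᵥ x) ^ 2 = ∑ j, (Yᵀ *ᵥ x) j ^ 2 := by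
    intro x
    rw [hSdef, eN_fromRows_sq, hAx, hBx, ← Finset.sum_add_distrib]
    apply Finset.sum_congr rfl
    intro j _
    nlinarith [hnorm j]
  have hStx : ∀ x : Fin n → ℝ,
      eN ((Q * Qᵀ * A) *ᵥ x) ^ 2 + eN (B *ᵥ x) ^ 2 = ∑ j, (Ytᵀ *ᵥ x) j ^ 2 := by
    intro x
    rw [hAtx, hBtx, ← Finset.sum_add_distrib]
    apply Finset.sum_congr rfl
    intro j _
    nlinarith [hnormt j]
  -- S is injective, so Sp is a left inverse
  have hSinj : ∀ x : Fin n → ℝ, S *ᵥ x = 0 → x = 0 := by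
    intro x hx
    apply mulVec_inj_of_isUnit hYunit
    by_contra hy
    have h1 := sumsq_pos hy
    have h2 := hSx x
    rw [hx] at h2
    have h3 : eN (0 : Fin m ⊕ Fin d → ℝ) ^ 2 = 0 := by
      rw [eN_sq]; simp
    rw [h3] at h2
    linarith
  have hSpS : Sp * S = 1 := left_inv_of_pinv S Sp hSp.1 hSinj
  have hxle : ∀ x : Fin n → ℝ, eN x ≤ spec Sp * eN (S *ᵥ x) := by
    intro x
    have h1 : Sp *ᵥ (S *ᵥ x) = x := by
      rw [Matrix.mulVec_mulVec, hSpS, Matrix.one_mulVec]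
    calc eN x = eN (Sp *ᵥ (S *ᵥ x)) := by rw [h1]
      _ ≤ spec Sp * eN (S *ᵥ x) := spec_mulVec_le Sp (S *ᵥ x)
  -- the pointwise chordal bound
  have H : ∀ x : Fin n → ℝ, x ≠ 0 →
      |Real.sqrt (∑ j, gt j ^ 2 * (Ytᵀ *ᵥ x) j ^ 2) *
          Real.sqrt (∑ j, b j ^ 2 * (Yᵀ *ᵥ x) j ^ 2) -
        Real.sqrt (∑ j, bt j ^ 2 * (Ytᵀ *ᵥ x) j ^ 2) *
          Real.sqrt (∑ j, g j ^ 2 * (Yᵀ *ᵥ x) j ^ 2)|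
        ≤ ε * (Real.sqrt (∑ j, (Yᵀ *ᵥ x) j ^ 2) * Real.sqrt (∑ j, (Ytᵀ *ᵥ x) j ^ 2)) := by
    intro x hx
    have e1 : Real.sqrt (∑ j, gt j ^ 2 * (Ytᵀ *ᵥ x) j ^ 2) = eN ((Q * Qᵀ * A) *ᵥ x) := by
      rw [← hAtx x, Real.sqrt_sq (eN_nonneg _)]
    have e2 : Real.sqrt (∑ j, b j ^ 2 * (Yᵀ *ᵥ x) j ^ 2) = eN (B *ᵥ x) := by
      rw [← hBx x, Real.sqrt_sq (eN_nonneg _)]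
    have e3 : Real.sqrt (∑ j, bt j ^ 2 * (Ytᵀ *ᵥ x) j ^ 2) = eN (B *ᵥ x) := by
      rw [← hBtx x, Real.sqrt_sq (eN_nonneg _)]
    have e4 : Real.sqrt (∑ j, g j ^ 2 * (Yᵀ *ᵥ x) j ^ 2) = eN (A *ᵥ x) := by
      rw [← hAx x, Real.sqrt_sq (eN_nonneg _)]
    have e5 : Real.sqrt (∑ j, (Yᵀ *ᵥ x) j ^ 2) = eN (S *ᵥ x) := by
      rw [← hSx x, Real.sqrt_sq (eN_nonneg _)]
    rw [e1, e2, e3, e4, e5]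
    -- |eN Ãx - eN Ax| ≤ eN (E x)
    have hEx : (Q * Qᵀ * A) *ᵥ x - A *ᵥ x = -(E *ᵥ x) := by
      rw [hE, Matrix.sub_mulVec]
      ring_nf
    have hEx2 : A *ᵥ x - (Q * Qᵀ * A) *ᵥ x = E *ᵥ x := by
      rw [hE, Matrix.sub_mulVec]
    have hdiff : |eN ((Q * Qᵀ * A) *ᵥ x) - eN (A *ᵥ x)| ≤ eN (E *ᵥ x) := by
      rw [abs_le]
      constructor
      · have := eN_sub_le (A *ᵥ x) ((Q * Qᵀ * A) *ᵥ x)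
        rw [hEx2] at this
        linarith
      · have := eN_sub_le ((Q * Qᵀ * A) *ᵥ x) (A *ᵥ x)
        rw [hEx] at this
        have hneg : eN (-(E *ᵥ x)) = eN (E *ᵥ x) := by
          simp only [eN]
          congr 1
          apply Finset.sum_congr rfl
          intro j _
          simp [neg_sq]
        rw [hneg] at this
        linarith
    -- eN Bx ≤ sqrt(∑ yt²)
    have hBle : eN (B *ᵥ x) ≤ Real.sqrt (∑ j, (Ytᵀ *ᵥ x) j ^ 2) := by
      rw [← hStx x]
      have h1 : eN (B *ᵥ x) ^ 2 ≤ eN ((Q * Qᵀ * A) *ᵥ x) ^ 2 + eN (B *ᵥ x) ^ 2 := by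
        nlinarith [eN_nonneg ((Q * Qᵀ * A) *ᵥ x)]
      calc eN (B *ᵥ x) = Real.sqrt (eN (B *ᵥ x) ^ 2) := (Real.sqrt_sq (eN_nonneg _)).symm
        _ ≤ Real.sqrt (eN ((Q * Qᵀ * A) *ᵥ x) ^ 2 + eN (B *ᵥ x) ^ 2) :=
            Real.sqrt_le_sqrt h1
    -- eN (E x) ≤ ε * eN (S x)
    have hEle : eN (E *ᵥ x) ≤ ε * eN (S *ᵥ x) := by
      calc eN (E *ᵥ x) ≤ spec E * eN x := spec_mulVec_le E x
        _ ≤ spec E * (spec Sp * eN (S *ᵥ x)) := by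
            apply mul_le_mul_of_nonneg_left (hxle x) (spec_nonneg E)
        _ = ε * eN (S *ᵥ x) := by rw [hεdef]; ring
    calc |eN ((Q * Qᵀ * A) *ᵥ x) * eN (B *ᵥ x) - eN (B *ᵥ x) * eN (A *ᵥ x)|
        = eN (B *ᵥ x) * |eN ((Q * Qᵀ * A) *ᵥ x) - eN (A *ᵥ x)| := by
          have hrw : eN ((Q * Qᵀ * A) *ᵥ x) * eN (B *ᵥ x) - eN (B *ᵥ x) * eN (A *ᵥ x) =
              eN (B *ᵥ x) * (eN ((Q * Qᵀ * A) *ᵥ x) - eN (A *ᵥ x)) := by ring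
          rw [hrw, abs_mul, abs_of_nonneg (eN_nonneg (B *ᵥ x))]
      _ ≤ Real.sqrt (∑ j, (Ytᵀ *ᵥ x) j ^ 2) * (ε * eN (S *ᵥ x)) := by
          apply mul_le_mul hBle (le_trans hdiff hEle) (abs_nonneg _) (Real.sqrt_nonneg _)
      _ = ε * (eN (S *ᵥ x) * Real.sqrt (∑ j, (Ytᵀ *ᵥ x) j ^ 2)) := by ring
  -- monotonicity
  have hbinc := b_mono g b hg0 hb0 hnorm hord
  have hbtinc := b_mono gt bt hgt0 hbt0 hnormt hordt
  -- the two directions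
  have dir1 := core_bound Y Yt hYunit hYtunit g b gt bt hb0 hbt0 hnorm hnormt hbinc hbtinc ε H
  have H' : ∀ x : Fin n → ℝ, x ≠ 0 →
      |Real.sqrt (∑ j, g j ^ 2 * (Yᵀ *ᵥ x) j ^ 2) *
          Real.sqrt (∑ j, bt j ^ 2 * (Ytᵀ *ᵥ x) j ^ 2) -
        Real.sqrt (∑ j, b j ^ 2 * (Yᵀ *ᵥ x) j ^ 2) *
          Real.sqrt (∑ j, gt j ^ 2 * (Ytᵀ *ᵥ x) j ^ 2)|
        ≤ ε * (Real.sqrt (∑ j, (Ytᵀ *ᵥ x) j ^ 2) * Real.sqrt (∑ j, (Yᵀ *ᵥ x) j ^ 2)) := by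
    intro x hx
    have h := H x hx
    rw [abs_sub_comm] at h
    calc |Real.sqrt (∑ j, g j ^ 2 * (Yᵀ *ᵥ x) j ^ 2) *
          Real.sqrt (∑ j, bt j ^ 2 * (Ytᵀ *ᵥ x) j ^ 2) -
        Real.sqrt (∑ j, b j ^ 2 * (Yᵀ *ᵥ x) j ^ 2) *
          Real.sqrt (∑ j, gt j ^ 2 * (Ytᵀ *ᵥ x) j ^ 2)|
        = |Real.sqrt (∑ j, bt j ^ 2 * (Ytᵀ *ᵥ x) j ^ 2) *
            Real.sqrt (∑ j, g j ^ 2 * (Yᵀ *ᵥ x) j ^ 2) -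
          Real.sqrt (∑ j, gt j ^ 2 * (Ytᵀ *ᵥ x) j ^ 2) *
            Real.sqrt (∑ j, b j ^ 2 * (Yᵀ *ᵥ x) j ^ 2)| := by
          congr 1
          ring
      _ ≤ ε * (Real.sqrt (∑ j, (Yᵀ *ᵥ x) j ^ 2) * Real.sqrt (∑ j, (Ytᵀ *ᵥ x) j ^ 2)) := h
      _ = ε * (Real.sqrt (∑ j, (Ytᵀ *ᵥ x) j ^ 2) * Real.sqrt (∑ j, (Yᵀ *ᵥ x) j ^ 2)) := by ring
  have dir2 := core_bound Yt Y hYtunit hYunit gt bt g b hbt0 hb0 hnormt hnorm hbtinc hbinc ε H'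
  -- conclude part 1
  have part1 : ∀ i : Fin n, |gt i * b i - bt i * g i| ≤ ε := by
    intro i
    rcases le_or_gt ε 1 with hε1 | hε1
    · -- use the angle bound
      have hb1 : b i ≤ 1 := by nlinarith [hnorm i, hg0 i, hb0 i]
      have hbt1 : bt i ≤ 1 := by nlinarith [hnormt i, hgt0 i, hbt0 i]
      have hsinb : Real.sin (Real.arcsin (b i)) = b i :=
        Real.sin_arcsin (by linarith [hb0 i]) hb1
      have hsinbt : Real.sin (Real.arcsin (bt i)) = bt i :=
        Real.sin_arcsin (by linarith [hbt0 i]) hbt1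
      have hcosb : Real.cos (Real.arcsin (b i)) = g i := by
        rw [Real.cos_arcsin]
        have e1 : 1 - b i ^ 2 = g i ^ 2 := by linarith [hnorm i]
        rw [e1, Real.sqrt_sq (hg0 i)]
      have hcosbt : Real.cos (Real.arcsin (bt i)) = gt i := by
        rw [Real.cos_arcsin]
        have e1 : 1 - bt i ^ 2 = gt i ^ 2 := by linarith [hnormt i]
        rw [e1, Real.sqrt_sq (hgt0 i)]
      have hzid : Real.sin (Real.arcsin (b i) - Real.arcsin (bt i)) =
          gt i * b i - bt i * g i := by
        rw [Real.sin_sub, hsinb, hsinbt, hcosb, hcosbt]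
        ring
      have habs : |Real.arcsin (b i) - Real.arcsin (bt i)| ≤ Real.arcsin ε := by
        rw [abs_sub_le_iff]
        exact ⟨by linarith [dir2 i], by linarith [dir1 i]⟩
      have := abs_sin_le habs (Real.arcsin_le_pi_div_two ε)
      rw [hzid, Real.sin_arcsin (by linarith) hε1] at this
      exact this
    · -- trivial bound: chordal distance is at most 1
      have h1 : (gt i * b i - bt i * g i) ^ 2 ≤ 1 := by
        nlinarith [hnorm i, hnormt i, sq_nonneg (gt i * g i + bt i * b i)]
      have h2 : |gt i * b i - bt i * g i| ≤ 1 := by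
        rw [abs_le]
        constructor <;> nlinarith [h1]
      linarith
  refine ⟨part1, ?_⟩
  intro i hbi
  have h1 := part1 i
  rw [abs_le] at h1
  have hbt1 : bt i ≤ 1 := by nlinarith [hnormt i, hgt0 i, hbt0 i]
  have h2 : gt i * b i ≤ g i + ε := by
    have h3 : bt i * g i ≤ g i := by nlinarith [hg0 i, hbt0 i]
    linarith [h1.2]
  rw [le_div_iff₀ hbi]
  exact h2
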